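/- Let ρ : ℝ → [0,∞) be a probability density supported on [a, b], and suppose there exist constants 0 < c ≤ C such that c√(x-a) ≤ ρ(x) ≤ C√(x-a) for all x ∈ [a, a+δ] for some δ > 0, and ρ is bounded. Let m(z) = ∫ ρ(x)/(z-x) dx be its Stieltjes transform. Then there exist constants c', C' > 0 and δ' > 0 such that for all 0 ≤ κ ≤ δ' and 0 < η ≤ δ': c'·η/√(κ+η) ≤ Im m(a - κ + iη) ≤ C'·η/√(κ+η), and for -δ' ≤ κ ≤ 0: c'·√(|κ|+η) ≤ Im m(a - κ + iη) ≤ C'·√(|κ|+η). -/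

import Mathlib

open MeasureTheory

/- ### Auxiliary calculus lemmas -/

lemma stmt14_arctan_kernel_bound (μ η u v : ℝ) (hη : 0 < η) :
    ∫ x in u..v, η / ((x - μ)^2 + η^2) ≤ Real.pi := by
  have hF : ∀ x : ℝ, η / ((x - μ)^2 + η^2)
      = (fun t : ℝ => (fun y : ℝ => η⁻¹ * (1 / (1 + y^2))) (t / η)) (x - μ) := by
    intro x
    have h2 : (x - μ)^2 + η^2 ≠ 0 := by positivity
    field_simp
    ring
  have key : (∫ x in u..v, η / ((x - μ)^2 + η^2))
      = Real.arctan ((v - μ)/η) - Real.arctan ((u - μ)/η) := by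
    simp_rw [hF]
    rw [intervalIntegral.integral_comp_sub_right
        (fun t : ℝ => (fun y : ℝ => η⁻¹ * (1 / (1 + y^2))) (t / η)) μ]
    rw [intervalIntegral.integral_comp_div (fun y : ℝ => η⁻¹ * (1 / (1 + y^2))) hη.ne']
    rw [intervalIntegral.integral_const_mul, integral_one_div_one_add_sq, smul_eq_mul]
    field_simp
  rw [key]
  have h1 := Real.arctan_lt_pi_div_two ((v - μ)/η)
  have h2 := Real.neg_pi_div_two_lt_arctan ((u - μ)/η)
  linarith

lemma stmt14_tail_rpow_bound (s d : ℝ) (hs : 0 < s) (hsd : s ≤ d) :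
    ∫ x in s..d, x ^ (-(3:ℝ)/2) ≤ 2 / Real.sqrt s := by
  have h0 : (0:ℝ) ∉ Set.uIcc s d := by
    rw [Set.uIcc_of_le hsd]
    intro h; exact absurd (Set.mem_Icc.1 h).1 (not_le.2 hs)
  rw [integral_rpow (Or.inr ⟨by norm_num, h0⟩)]
  have hd : 0 < d := lt_of_lt_of_le hs hsd
  have h1 : s ^ (-(3:ℝ)/2 + 1) = 1 / Real.sqrt s := by
    rw [show (-(3:ℝ)/2 + 1) = -(1/2) by norm_num, Real.rpow_neg hs.le,
      ← Real.sqrt_eq_rpow, one_div]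
  have h2 : d ^ (-(3:ℝ)/2 + 1) = 1 / Real.sqrt d := by
    rw [show (-(3:ℝ)/2 + 1) = -(1/2) by norm_num, Real.rpow_neg hd.le,
      ← Real.sqrt_eq_rpow, one_div]
  rw [h1, h2]
  have h3 : 0 < Real.sqrt s := Real.sqrt_pos.2 hs
  have h4 : 0 < Real.sqrt d := Real.sqrt_pos.2 hd
  have heq : (1 / Real.sqrt d - 1 / Real.sqrt s) / (-(3:ℝ)/2 + 1)
      = 2 / Real.sqrt s - 2 / Real.sqrt d := by
    field_simp
    ring
  rw [heq]
  have : 0 ≤ 2 / Real.sqrt d := by positivity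
  linarith

lemma stmt14_lower_const_bound (f : ℝ → ℝ) (hf : Integrable f) (h0 : ∀ x, 0 ≤ f x)
    (u v M : ℝ) (huv : u ≤ v) (hM : ∀ x ∈ Set.Icc u v, M ≤ f x) :
    M * (v - u) ≤ ∫ x, f x := by
  have h1 : M * (v - u) ≤ ∫ x in u..v, f x := by
    have := intervalIntegral.integral_mono_on (μ := volume) huv
      (intervalIntegrable_const (c := M)) hf.intervalIntegrable hM
    simpa [intervalIntegral.integral_const, smul_eq_mul, mul_comm] using this
  have h2 : ∫ x in u..v, f x ≤ ∫ x, f x := by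
    rw [intervalIntegral.integral_of_le huv]
    exact setIntegral_le_integral hf (Filter.Eventually.of_forall h0)
  linarith

lemma stmt14_f_cont (a E η C : ℝ) (hη : 0 < η) :
    Continuous (fun x : ℝ => C * Real.sqrt (x - a) * (η / ((x - E)^2 + η^2))) := by
  apply Continuous.mul
  · exact continuous_const.mul (Real.continuous_sqrt.comp (continuous_sub_right a))
  · exact Continuous.div continuous_const (by continuity) (fun x => by positivity)

lemma stmt14_rpow_cont (a s d C : ℝ) (hs : 0 < s) (hsd : s ≤ d) :
    IntervalIntegrable (fun x : ℝ => C * (x - a) ^ (-(3:ℝ)/2)) volume (a + s) (a + d) := by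
  apply ContinuousOn.intervalIntegrable
  rw [Set.uIcc_of_le (by linarith)]
  apply ContinuousOn.mul continuousOn_const
  apply ContinuousOn.rpow_const ((continuous_sub_right a).continuousOn)
  intro x hx
  have := (Set.mem_Icc.1 hx).1
  exact Or.inl (ne_of_gt (by linarith))

lemma stmt14_rpow_eq_sqrt_div (t : ℝ) (ht : 0 < t) :
    t ^ (-(3:ℝ)/2) = Real.sqrt t / t^2 := by
  rw [show (-(3:ℝ)/2) = 1/2 - 2 by norm_num, Real.rpow_sub ht,
    ← Real.sqrt_eq_rpow, show ((2:ℝ)) = ((2:ℕ):ℝ) by norm_num, Real.rpow_natCast]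

lemma stmt14_rpow_tail_integral (a s d C : ℝ) (hC : 0 ≤ C) (hs : 0 < s) (hsd : s ≤ d) :
    ∫ x in (a+s)..(a+d), C * (x - a) ^ (-(3:ℝ)/2) ≤ 2 * C / Real.sqrt s := by
  rw [intervalIntegral.integral_const_mul]
  have h1 : ∫ x in (a+s)..(a+d), (x - a) ^ (-(3:ℝ)/2)
      = ∫ x in s..d, x ^ (-(3:ℝ)/2) := by
    have := intervalIntegral.integral_comp_sub_right (fun t : ℝ => t ^ (-(3:ℝ)/2)) a
      (a := a+s) (b := a+d)
    rw [this, show a + s - a = s by ring, show a + d - a = d by ring]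
  rw [h1]
  have h2 := stmt14_tail_rpow_bound s d hs hsd
  calc C * ∫ x in s..d, x ^ (-(3:ℝ)/2) ≤ C * (2 / Real.sqrt s) :=
        mul_le_mul_of_nonneg_left h2 hC
    _ = 2 * C / Real.sqrt s := by ring

/-- Outside-the-support near-field bound. -/
lemma stmt14_near_out (a δ κ η C : ℝ) (hC : 0 ≤ C) (hκ : 0 ≤ κ) (hη : 0 < η)
    (hsδ : κ + η ≤ δ) :
    ∫ x in a..(a+δ), C * Real.sqrt (x - a) * (η / ((x - (a - κ))^2 + η^2))
      ≤ 4 * C * η / Real.sqrt (κ + η) := by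
  set s := κ + η with hsdef
  have hs : 0 < s := by positivity
  have hrt : 0 < Real.sqrt s := Real.sqrt_pos.2 hs
  set f := fun x : ℝ => C * Real.sqrt (x - a) * (η / ((x - (a - κ))^2 + η^2)) with hf
  have hfc : Continuous f := stmt14_f_cont a (a - κ) η C hη
  have hsplit : ∫ x in a..(a+δ), f x
      = (∫ x in a..(a+s), f x) + ∫ x in (a+s)..(a+δ), f x :=
    (intervalIntegral.integral_add_adjacent_intervals
      (hfc.intervalIntegrable _ _) (hfc.intervalIntegrable _ _)).symm
  have hp1 : ∫ x in a..(a+s), f x ≤ 2 * C * η / Real.sqrt s := by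
    have hmono : ∀ x ∈ Set.Icc a (a+s), f x ≤ C * Real.sqrt s * (2 * η / s^2) := by
      intro x hx
      obtain ⟨hx1, hx2⟩ := Set.mem_Icc.1 hx
      have h1 : Real.sqrt (x - a) ≤ Real.sqrt s := Real.sqrt_le_sqrt (by linarith)
      have h2 : η / ((x - (a - κ))^2 + η^2) ≤ 2 * η / s^2 := by
        rw [div_le_div_iff₀ (by positivity) (by positivity)]
        have hxa : x - (a - κ) = (x - a) + κ := by ring
        rw [hxa, hsdef]
        nlinarith [mul_nonneg hη.le (sq_nonneg (x - a)),
          mul_nonneg hη.le (sq_nonneg (κ - η)),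
          mul_nonneg hη.le (mul_nonneg (sub_nonneg.2 hx1) hκ)]
      calc f x ≤ (C * Real.sqrt s) * (η / ((x - (a - κ))^2 + η^2)) := by
            apply mul_le_mul_of_nonneg_right (mul_le_mul_of_nonneg_left h1 hC)
              (by positivity)
        _ ≤ (C * Real.sqrt s) * (2 * η / s^2) :=
            mul_le_mul_of_nonneg_left h2 (by positivity)
    have := intervalIntegral.integral_mono_on (μ := volume) (by linarith : a ≤ a + s)
      (hfc.intervalIntegrable _ _) intervalIntegrable_const hmono
    rw [intervalIntegral.integral_const, smul_eq_mul] at this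
    have heq : (a + s - a) * (C * Real.sqrt s * (2 * η / s^2))
        = 2 * C * η / Real.sqrt s := by
      have hss : Real.sqrt s * Real.sqrt s = s := Real.mul_self_sqrt hs.le
      field_simp
      linear_combination (C * s) * hss
    linarith [heq ▸ this]
  have hp2 : ∫ x in (a+s)..(a+δ), f x ≤ 2 * C * η / Real.sqrt s := by
    have hmono : ∀ x ∈ Set.Icc (a+s) (a+δ),
        f x ≤ (C * η) * (x - a) ^ (-(3:ℝ)/2) := by
      intro x hx
      obtain ⟨hx1, hx2⟩ := Set.mem_Icc.1 hx
      have ht : 0 < x - a := by linarith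
      rw [stmt14_rpow_eq_sqrt_div _ ht]
      have h2 : η / ((x - (a - κ))^2 + η^2) ≤ η / (x - a)^2 := by
        apply div_le_div_of_nonneg_left hη.le (by positivity)
        nlinarith
      calc f x ≤ C * Real.sqrt (x - a) * (η / (x - a)^2) :=
            mul_le_mul_of_nonneg_left h2 (by positivity)
        _ = (C * η) * (Real.sqrt (x - a) / (x - a)^2) := by ring
    have := intervalIntegral.integral_mono_on (μ := volume) (by linarith : a + s ≤ a + δ)
      (hfc.intervalIntegrable _ _) (stmt14_rpow_cont a s δ (C * η) hs hsδ) hmono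
    have h3 := stmt14_rpow_tail_integral a s δ (C * η) (by positivity) hs hsδ
    calc ∫ x in (a+s)..(a+δ), f x ≤ ∫ x in (a+s)..(a+δ), (C*η) * (x-a) ^ (-(3:ℝ)/2) := this
      _ ≤ 2 * (C * η) / Real.sqrt s := h3
      _ = 2 * C * η / Real.sqrt s := by ring
  rw [hsplit]
  have : 2 * C * η / Real.sqrt s + 2 * C * η / Real.sqrt s
      = 4 * C * η / Real.sqrt s := by ring
  linarith

/-- Inside-the-support near-field bound. -/
lemma stmt14_near_in (a δ k η C : ℝ) (hC : 0 ≤ C) (hk : 0 ≤ k) (hη : 0 < η)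
    (hsδ : 2 * (k + η) ≤ δ) :
    ∫ x in a..(a+δ), C * Real.sqrt (x - a) * (η / ((x - (a + k))^2 + η^2))
      ≤ (2 * Real.pi * C + 8 * C) * Real.sqrt (k + η) := by
  set s := 2 * (k + η) with hsdef
  have hs : 0 < s := by positivity
  have hkη : 0 < k + η := by positivity
  have hrt : 0 < Real.sqrt (k + η) := Real.sqrt_pos.2 hkη
  have hrts : 0 < Real.sqrt s := Real.sqrt_pos.2 hs
  have hsle : Real.sqrt s ≤ 2 * Real.sqrt (k + η) := by
    rw [hsdef, Real.sqrt_mul (by norm_num : (0:ℝ) ≤ 2)]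
    have h2 : Real.sqrt 2 ≤ 2 := by
      nlinarith [Real.sq_sqrt (by norm_num : (0:ℝ) ≤ 2), Real.sqrt_nonneg 2]
    nlinarith
  have hsge : Real.sqrt (k + η) ≤ Real.sqrt s := Real.sqrt_le_sqrt (by rw [hsdef]; linarith)
  set f := fun x : ℝ => C * Real.sqrt (x - a) * (η / ((x - (a + k))^2 + η^2)) with hf
  have hfc : Continuous f := stmt14_f_cont a (a + k) η C hη
  have hsplit : ∫ x in a..(a+δ), f x
      = (∫ x in a..(a+s), f x) + ∫ x in (a+s)..(a+δ), f x :=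
    (intervalIntegral.integral_add_adjacent_intervals
      (hfc.intervalIntegrable _ _) (hfc.intervalIntegrable _ _)).symm
  have hkerc : Continuous (fun x : ℝ => (C * Real.sqrt s) * (η / ((x - (a + k))^2 + η^2))) := by
    apply Continuous.mul continuous_const
    exact Continuous.div continuous_const (by continuity) (fun x => by positivity)
  have hp1 : ∫ x in a..(a+s), f x ≤ 2 * Real.pi * C * Real.sqrt (k + η) := by
    have hmono : ∀ x ∈ Set.Icc a (a+s),
        f x ≤ (C * Real.sqrt s) * (η / ((x - (a + k))^2 + η^2)) := by
      intro x hx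
      obtain ⟨hx1, hx2⟩ := Set.mem_Icc.1 hx
      have h1 : Real.sqrt (x - a) ≤ Real.sqrt s := Real.sqrt_le_sqrt (by linarith)
      exact mul_le_mul_of_nonneg_right (mul_le_mul_of_nonneg_left h1 hC) (by positivity)
    have hmle := intervalIntegral.integral_mono_on (μ := volume) (by linarith : a ≤ a + s)
      (hfc.intervalIntegrable _ _) (hkerc.intervalIntegrable _ _) hmono
    have h2 : ∫ x in a..(a+s), (C * Real.sqrt s) * (η / ((x - (a + k))^2 + η^2))
        = (C * Real.sqrt s) * ∫ x in a..(a+s), η / ((x - (a + k))^2 + η^2) :=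
      intervalIntegral.integral_const_mul _ _
    have h3 := stmt14_arctan_kernel_bound (a + k) η a (a + s) hη
    have hpi := Real.pi_pos
    calc ∫ x in a..(a+s), f x
        ≤ (C * Real.sqrt s) * ∫ x in a..(a+s), η / ((x - (a + k))^2 + η^2) := by
          rw [← h2]; exact hmle
      _ ≤ (C * Real.sqrt s) * Real.pi := mul_le_mul_of_nonneg_left h3 (by positivity)
      _ ≤ (C * (2 * Real.sqrt (k + η))) * Real.pi := by
          nlinarith [mul_le_mul_of_nonneg_left hsle (mul_nonneg hC hpi.le)]
      _ = 2 * Real.pi * C * Real.sqrt (k + η) := by ring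
  have hp2 : ∫ x in (a+s)..(a+δ), f x ≤ 8 * C * Real.sqrt (k + η) := by
    have hmono : ∀ x ∈ Set.Icc (a+s) (a+δ),
        f x ≤ (4 * C * η) * (x - a) ^ (-(3:ℝ)/2) := by
      intro x hx
      obtain ⟨hx1, hx2⟩ := Set.mem_Icc.1 hx
      have ht : 0 < x - a := by linarith
      have htk : (x - a) / 2 ≤ x - (a + k) := by
        have : s ≤ x - a := by linarith
        rw [hsdef] at this
        linarith
      rw [stmt14_rpow_eq_sqrt_div _ ht]
      have h2 : η / ((x - (a + k))^2 + η^2) ≤ 4 * η / (x - a)^2 := by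
        rw [div_le_div_iff₀ (by positivity) (by positivity)]
        have hq : ((x - a)/2)^2 ≤ (x - (a + k))^2 :=
          pow_le_pow_left₀ (by positivity) htk 2
        nlinarith [mul_le_mul_of_nonneg_left hq hη.le,
          mul_nonneg hη.le (sq_nonneg η)]
      calc f x ≤ C * Real.sqrt (x - a) * (4 * η / (x - a)^2) :=
            mul_le_mul_of_nonneg_left h2 (by positivity)
        _ = (4 * C * η) * (Real.sqrt (x - a) / (x - a)^2) := by ring
    have hmle := intervalIntegral.integral_mono_on (μ := volume) (by linarith : a + s ≤ a + δ)
      (hfc.intervalIntegrable _ _) (stmt14_rpow_cont a s δ (4 * C * η) hs hsδ) hmono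
    have h3 := stmt14_rpow_tail_integral a s δ (4 * C * η) (by positivity) hs hsδ
    have h4 : 2 * (4 * C * η) / Real.sqrt s ≤ 8 * C * Real.sqrt (k + η) := by
      rw [div_le_iff₀ hrts]
      have h5 : η ≤ Real.sqrt (k + η) * Real.sqrt (k + η) := by
        rw [Real.mul_self_sqrt hkη.le]; linarith
      nlinarith [mul_le_mul_of_nonneg_left hsge
        (by positivity : (0:ℝ) ≤ 8 * C * Real.sqrt (k+η))]
    linarith
  rw [hsplit]
  linarith

lemma stmt14_g_integrable (ρ : ℝ → ℝ) (hρ : Integrable ρ) (hmeas : Measurable ρ)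
    (hnonneg : ∀ x, 0 ≤ ρ x) (E η : ℝ) (hη : 0 < η) :
    Integrable (fun x : ℝ => ρ x * (η / ((x - E)^2 + η^2))) := by
  have hker : Continuous (fun x : ℝ => η / ((x - E)^2 + η^2)) := by
    apply Continuous.div continuous_const (by continuity)
    intro x; positivity
  apply (hρ.const_mul (1/η)).mono'
    ((hmeas.mul hker.measurable).aestronglyMeasurable)
  filter_upwards with x
  have hker_le : η / ((x - E)^2 + η^2) ≤ 1/η := by
    rw [div_le_div_iff₀ (by positivity) hη]
    nlinarith [sq_nonneg (x - E)]
  have hker_nn : 0 ≤ η / ((x - E)^2 + η^2) := by positivity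
  rw [Real.norm_eq_abs, Pi.mul_apply, abs_of_nonneg (mul_nonneg (hnonneg x) hker_nn)]
  calc ρ x * (η / ((x - E)^2 + η^2)) ≤ ρ x * (1/η) :=
        mul_le_mul_of_nonneg_left hker_le (hnonneg x)
    _ = 1/η * ρ x := mul_comm _ _

lemma stmt14_im_rep (ρ : ℝ → ℝ) (hρ : Integrable ρ) (hmeas : Measurable ρ)
    (hnonneg : ∀ x, 0 ≤ ρ x) (E η : ℝ) (hη : 0 < η) :
    |(∫ x : ℝ, (ρ x : ℂ) / (((E:ℂ) + η * Complex.I) - (x : ℂ))).im|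
      = ∫ x : ℝ, ρ x * (η / ((x - E)^2 + η^2)) := by
  set z : ℂ := (E:ℂ) + η * Complex.I with hz
  have hC : Integrable (fun x : ℝ => (ρ x : ℂ) / (z - (x:ℂ))) := by
    have hmz : AEStronglyMeasurable (fun x : ℝ => (ρ x : ℂ) / (z - (x:ℂ))) volume := by
      apply Measurable.aestronglyMeasurable
      exact (Complex.measurable_ofReal.comp hmeas).div
        (measurable_const.sub Complex.measurable_ofReal)
    apply (hρ.const_mul (1/η)).mono' hmz
    filter_upwards with x
    have habs : η ≤ ‖z - (x:ℂ)‖ := by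
      have h1 : (z - (x:ℂ)).im = η := by simp [hz]
      calc η = |(z - (x:ℂ)).im| := by rw [h1, abs_of_pos hη]
        _ ≤ ‖z - (x:ℂ)‖ := Complex.abs_im_le_norm _
    rw [norm_div, Complex.norm_real, Real.norm_eq_abs, abs_of_nonneg (hnonneg x)]
    rw [div_le_iff₀ (lt_of_lt_of_le hη habs)]
    calc 1/η * ρ x * ‖z - (x:ℂ)‖ ≥ 1/η * ρ x * η := by
          apply mul_le_mul_of_nonneg_left habs (mul_nonneg (by positivity) (hnonneg x))
      _ = ρ x := by field_simp
  have hptw : ∀ x : ℝ, ((ρ x : ℂ) / (z - (x:ℂ))).im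
      = -(ρ x * (η / ((x - E)^2 + η^2))) := by
    intro x
    rw [div_eq_mul_inv, Complex.im_ofReal_mul, Complex.inv_im]
    have h1 : (z - (x:ℂ)).im = η := by simp [hz]
    have h2 : Complex.normSq (z - (x:ℂ)) = (x - E)^2 + η^2 := by
      rw [Complex.normSq_apply]
      have : (z - (x:ℂ)).re = E - x := by simp [hz]
      rw [this, h1]; ring
    rw [h1, h2]
    ring
  have him : (∫ x : ℝ, (ρ x : ℂ) / (z - (x:ℂ))).im
      = ∫ x : ℝ, ((ρ x : ℂ) / (z - (x:ℂ))).im := by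
    have := integral_im (μ := volume) hC
    simpa using this.symm
  rw [him]
  simp_rw [hptw]
  rw [integral_neg, abs_neg, abs_of_nonneg]
  apply integral_nonneg
  intro x
  have : 0 ≤ η / ((x - E)^2 + η^2) := by positivity
  exact mul_nonneg (hnonneg x) this

lemma stmt14_upper_decomp (ρ : ℝ → ℝ) (a b δ C E η : ℝ)
    (hρ : Integrable ρ) (hmeas : Measurable ρ) (hnonneg : ∀ x, 0 ≤ ρ x)
    (hsupp : ∀ x, x ∉ Set.Icc a b → ρ x = 0) (hprob : ∫ x, ρ x = 1)
    (hsqU : ∀ x ∈ Set.Icc a (a + δ), ρ x ≤ C * Real.sqrt (x - a))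
    (hδ : 0 < δ) (hη : 0 < η) (hE : E ≤ a + δ/4) :
    ∫ x, ρ x * (η / ((x - E)^2 + η^2))
      ≤ (∫ x in a..(a+δ), C * Real.sqrt (x - a) * (η / ((x - E)^2 + η^2)))
        + 4 * η / δ^2 := by
  set g := fun x : ℝ => ρ x * (η / ((x - E)^2 + η^2)) with hgdef
  have hg : Integrable g := stmt14_g_integrable ρ hρ hmeas hnonneg E η hη
  have hsplit := integral_add_compl (measurableSet_Icc (a := a) (b := a + δ)) hg
  rw [← hsplit]
  have hterm1 : ∫ x in Set.Icc a (a+δ), g x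
      ≤ ∫ x in a..(a+δ), C * Real.sqrt (x - a) * (η / ((x - E)^2 + η^2)) := by
    have h1 : ∫ x in Set.Icc a (a+δ), g x = ∫ x in a..(a+δ), g x := by
      rw [intervalIntegral.integral_of_le (by linarith), integral_Icc_eq_integral_Ioc]
    rw [h1]
    apply intervalIntegral.integral_mono_on (μ := volume) (by linarith)
      hg.intervalIntegrable ((stmt14_f_cont a E η C hη).intervalIntegrable _ _)
    intro x hx
    have hker_nn : 0 ≤ η / ((x - E)^2 + η^2) := by positivity
    exact mul_le_mul_of_nonneg_right (hsqU x hx) hker_nn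
  have hterm2 : ∫ x in (Set.Icc a (a+δ))ᶜ, g x ≤ 4 * η / δ^2 := by
    have hptw : ∀ x ∈ (Set.Icc a (a+δ))ᶜ, g x ≤ (4 * η / δ^2) * ρ x := by
      intro x hx
      rw [Set.mem_compl_iff, Set.mem_Icc, not_and_or] at hx
      rcases hx with hx | hx
      · push_neg at hx
        have hρ0 : ρ x = 0 := hsupp x (by
          rw [Set.mem_Icc]; push_neg; intro h; linarith)
        simp [hgdef, hρ0]
      · push_neg at hx
        have hxE : δ/2 ≤ x - E := by linarith
        have hker : η / ((x - E)^2 + η^2) ≤ 4 * η / δ^2 := by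
          rw [div_le_div_iff₀ (by positivity) (by positivity)]
          nlinarith [mul_nonneg hη.le (sq_nonneg η), hη.le,
            mul_le_mul_of_nonneg_left (mul_le_mul hxE hxE (by linarith) (by linarith)) hη.le]
        calc g x = ρ x * (η / ((x - E)^2 + η^2)) := rfl
          _ ≤ ρ x * (4 * η / δ^2) := mul_le_mul_of_nonneg_left hker (hnonneg x)
          _ = (4 * η / δ^2) * ρ x := mul_comm _ _
    have h2 : ∫ x in (Set.Icc a (a+δ))ᶜ, g x
        ≤ ∫ x in (Set.Icc a (a+δ))ᶜ, (4 * η / δ^2) * ρ x :=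
      setIntegral_mono_on hg.integrableOn ((hρ.const_mul _).integrableOn)
        measurableSet_Icc.compl hptw
    have h3 : ∫ x in (Set.Icc a (a+δ))ᶜ, (4 * η / δ^2) * ρ x
        = (4 * η / δ^2) * ∫ x in (Set.Icc a (a+δ))ᶜ, ρ x := by rw [integral_const_mul]
    have h4 : ∫ x in (Set.Icc a (a+δ))ᶜ, ρ x ≤ 1 := by
      rw [← hprob]
      exact setIntegral_le_integral hρ (Filter.Eventually.of_forall hnonneg)
    have h5 : (0:ℝ) ≤ 4 * η / δ^2 := by positivity
    calc ∫ x in (Set.Icc a (a+δ))ᶜ, g x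
        ≤ (4 * η / δ^2) * ∫ x in (Set.Icc a (a+δ))ᶜ, ρ x := by rw [← h3]; exact h2
      _ ≤ (4 * η / δ^2) * 1 := mul_le_mul_of_nonneg_left h4 h5
      _ = 4 * η / δ^2 := mul_one _
  linarith

set_option maxHeartbeats 2000000 in
/-- near a square-root edge `a` of a compactly supported bounded probability
density `ρ`, the imaginary part of the Stieltjes transform `m(z) = ∫ ρ(x)/(z-x) dx`
satisfies `|Im m(a-κ+iη)| ≍ η/√(κ+η)` outside the support (`κ ≥ 0`) and
`|Im m(a-κ+iη)| ≍ √(|κ|+η)` inside the support (`κ ≤ 0`). -/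
theorem stmt_14 (ρ : ℝ → ℝ) (a b δ c C B : ℝ) (hab : a < b) (hδ : 0 < δ)
    (hc : 0 < c) (hcC : c ≤ C)
    (hmeas : Measurable ρ) (hnonneg : ∀ x, 0 ≤ ρ x)
    (hsupp : ∀ x, x ∉ Set.Icc a b → ρ x = 0)
    (hprob : ∫ x, ρ x = 1)
    (hB : ∀ x, ρ x ≤ B)
    (hsq : ∀ x ∈ Set.Icc a (a + δ),
      c * Real.sqrt (x - a) ≤ ρ x ∧ ρ x ≤ C * Real.sqrt (x - a))
    (m : ℂ → ℂ) (hm : ∀ z, m z = ∫ x : ℝ, (ρ x : ℂ) / (z - (x : ℂ))) :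
    ∃ c' > 0, ∃ C' > 0, ∃ δ' > 0,
      (∀ κ η : ℝ, 0 ≤ κ → κ ≤ δ' → 0 < η → η ≤ δ' →
        c' * η / Real.sqrt (κ + η) ≤ |(m ((a : ℂ) - κ + η * Complex.I)).im| ∧
        |(m ((a : ℂ) - κ + η * Complex.I)).im| ≤ C' * η / Real.sqrt (κ + η)) ∧
      (∀ κ η : ℝ, -δ' ≤ κ → κ ≤ 0 → 0 < η → η ≤ δ' →
        c' * Real.sqrt (|κ| + η) ≤ |(m ((a : ℂ) - κ + η * Complex.I)).im| ∧
        |(m ((a : ℂ) - κ + η * Complex.I)).im| ≤ C' * Real.sqrt (|κ| + η)) := by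
  have hC0 : 0 < C := lt_of_lt_of_le hc hcC
  have hpi := Real.pi_pos
  have hrδ : 0 < Real.sqrt δ := Real.sqrt_pos.2 hδ
  -- integrability of ρ
  have hρint : Integrable ρ := by
    have hind : Integrable ((Set.Icc a b).indicator (fun _ => B)) := by
      rw [integrable_indicator_iff measurableSet_Icc]
      exact integrableOn_const measure_Icc_lt_top.ne
    apply hind.mono' hmeas.aestronglyMeasurable
    filter_upwards with x
    rw [Real.norm_eq_abs, abs_of_nonneg (hnonneg x)]
    by_cases hx : x ∈ Set.Icc a b
    · rw [Set.indicator_of_mem hx]; exact hB x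
    · rw [Set.indicator_of_notMem hx, hsupp x hx]
  -- representation of |Im m|
  have hrep : ∀ κ η : ℝ, 0 < η → |(m ((a : ℂ) - κ + η * Complex.I)).im|
      = ∫ x : ℝ, ρ x * (η / ((x - (a - κ))^2 + η^2)) := by
    intro κ η hη
    have hz : (a : ℂ) - κ + η * Complex.I
        = (((a - κ : ℝ)):ℂ) + (η:ℝ) * Complex.I := by push_cast; ring
    rw [hz, hm, stmt14_im_rep ρ hρint hmeas hnonneg (a - κ) η hη]
  refine ⟨c/10, by positivity, 8*C + 4*Real.pi*C + 4*Real.sqrt δ/δ^2, by positivity,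
    δ/4, by positivity, ?_, ?_⟩
  · -- outside the support: 0 ≤ κ
    intro κ η hκ0 hκδ hη0 hηδ
    rw [hrep κ η hη0]
    have hs0 : 0 < κ + η := by positivity
    have hrs : 0 < Real.sqrt (κ + η) := Real.sqrt_pos.2 hs0
    have hsδ2 : κ + η ≤ δ/2 := by linarith
    have hg := stmt14_g_integrable ρ hρint hmeas hnonneg (a - κ) η hη0
    have hgnn : ∀ x, 0 ≤ ρ x * (η / ((x - (a - κ))^2 + η^2)) :=
      fun x => mul_nonneg (hnonneg x) (by positivity)
    constructor
    · -- lower bound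
      set s := κ + η with hsdef
      have hM : ∀ x ∈ Set.Icc (a + s) (a + 2*s),
          c * Real.sqrt s * (η / (10 * s^2))
            ≤ ρ x * (η / ((x - (a - κ))^2 + η^2)) := by
        intro x hx
        obtain ⟨hx1, hx2⟩ := Set.mem_Icc.1 hx
        have hxIcc : x ∈ Set.Icc a (a + δ) :=
          Set.mem_Icc.2 ⟨by linarith, by rw [hsdef] at hx2; linarith⟩
        have hρx := (hsq x hxIcc).1
        have h1 : Real.sqrt s ≤ Real.sqrt (x - a) := Real.sqrt_le_sqrt (by linarith)
        have h2 : η / (10 * s^2) ≤ η / ((x - (a - κ))^2 + η^2) := by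
          apply div_le_div_of_nonneg_left hη0.le (by positivity)
          have hxa : x - (a - κ) = (x - a) + κ := by ring
          rw [hxa]
          have hub : (x - a) + κ ≤ 3*s := by rw [hsdef] at hx2 ⊢; linarith
          have hlb : 0 ≤ (x - a) + κ := by linarith
          have hηs : η ≤ s := by rw [hsdef]; linarith
          nlinarith [mul_nonneg (sub_nonneg.2 hub) (by linarith : 0 ≤ 3*s + ((x-a)+κ))]
        calc c * Real.sqrt s * (η / (10 * s^2))
            ≤ c * Real.sqrt (x - a) * (η / (10 * s^2)) := by
              apply mul_le_mul_of_nonneg_right (mul_le_mul_of_nonneg_left h1 hc.le)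
                (by positivity)
          _ ≤ c * Real.sqrt (x - a) * (η / ((x - (a - κ))^2 + η^2)) :=
              mul_le_mul_of_nonneg_left h2 (by positivity)
          _ ≤ ρ x * (η / ((x - (a - κ))^2 + η^2)) :=
              mul_le_mul_of_nonneg_right hρx (by positivity)
      have hlow := stmt14_lower_const_bound _ hg hgnn (a + s) (a + 2*s)
        (c * Real.sqrt s * (η / (10 * s^2))) (by linarith) hM
      have heq : c * Real.sqrt s * (η / (10 * s^2)) * (a + 2*s - (a + s))
          = c/10 * η / Real.sqrt s := by
        have hss : Real.sqrt s ^ 2 = κ + η := by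
          rw [sq, Real.mul_self_sqrt hs0.le, hsdef]
        field_simp
        linear_combination (κ + η) * hss
      linarith [heq ▸ hlow]
    · -- upper bound
      have hup := stmt14_upper_decomp ρ a b δ C (a - κ) η hρint hmeas hnonneg hsupp hprob
        (fun x hx => (hsq x hx).2) hδ hη0 (by linarith)
      have hnear := stmt14_near_out a δ κ η C hC0.le hκ0 hη0 (by linarith)
      have hfar : 4 * η / δ^2
          ≤ (4 * Real.sqrt δ / δ^2) * η / Real.sqrt (κ + η) := by
        have hssd : Real.sqrt (κ + η) ≤ Real.sqrt δ := Real.sqrt_le_sqrt (by linarith)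
        rw [show (4 * Real.sqrt δ / δ^2) * η / Real.sqrt (κ + η)
          = 4 * Real.sqrt δ * η / (δ^2 * Real.sqrt (κ + η)) by ring,
          div_le_div_iff₀ (by positivity) (by positivity)]
        nlinarith [mul_le_mul_of_nonneg_left hssd
          (by positivity : (0:ℝ) ≤ 4 * η * δ^2)]
      have hmain : 4 * C * η / Real.sqrt (κ + η)
          ≤ (8*C + 4*Real.pi*C) * η / Real.sqrt (κ + η) := by
        refine (div_le_div_iff_of_pos_right hrs).2 ?_
        nlinarith [mul_nonneg (by positivity : (0:ℝ) ≤ 4*C + 4*Real.pi*C) hη0.le]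
      have hsum : (8*C + 4*Real.pi*C) * η / Real.sqrt (κ + η)
          + (4 * Real.sqrt δ / δ^2) * η / Real.sqrt (κ + η)
          = (8*C + 4*Real.pi*C + 4*Real.sqrt δ/δ^2) * η / Real.sqrt (κ + η) := by ring
      linarith
  · -- inside the support: κ ≤ 0
    intro κ η hκδ hκ0 hη0 hηδ
    rw [hrep κ η hη0]
    set k := -κ with hkdef
    have hk0 : 0 ≤ k := by rw [hkdef]; linarith
    have hkd : k ≤ δ/4 := by rw [hkdef]; linarith
    have habs : |κ| = k := by rw [hkdef, abs_of_nonpos hκ0]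
    have hEk : a - κ = a + k := by rw [hkdef]; ring
    have hkη : 0 < k + η := by positivity
    have hrs : 0 < Real.sqrt (k + η) := Real.sqrt_pos.2 hkη
    rw [habs]
    have hg := stmt14_g_integrable ρ hρint hmeas hnonneg (a - κ) η hη0
    have hgnn : ∀ x, 0 ≤ ρ x * (η / ((x - (a - κ))^2 + η^2)) :=
      fun x => mul_nonneg (hnonneg x) (by positivity)
    constructor
    · -- lower bound
      have hM : ∀ x ∈ Set.Icc (a + k + η) (a + k + 2*η),
          c * Real.sqrt (k + η) * (η / (5 * η^2))
            ≤ ρ x * (η / ((x - (a - κ))^2 + η^2)) := by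
        intro x hx
        obtain ⟨hx1, hx2⟩ := Set.mem_Icc.1 hx
        have hxIcc : x ∈ Set.Icc a (a + δ) :=
          Set.mem_Icc.2 ⟨by linarith, by linarith⟩
        have hρx := (hsq x hxIcc).1
        have h1 : Real.sqrt (k + η) ≤ Real.sqrt (x - a) := Real.sqrt_le_sqrt (by linarith)
        have h2 : η / (5 * η^2) ≤ η / ((x - (a - κ))^2 + η^2) := by
          apply div_le_div_of_nonneg_left hη0.le (by positivity)
          rw [hEk]
          have hub : x - (a + k) ≤ 2*η := by linarith
          have hlb : 0 ≤ x - (a + k) := by linarith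
          nlinarith [mul_nonneg (sub_nonneg.2 hub) (by linarith : 0 ≤ 2*η + (x - (a+k)))]
        calc c * Real.sqrt (k + η) * (η / (5 * η^2))
            ≤ c * Real.sqrt (x - a) * (η / (5 * η^2)) := by
              apply mul_le_mul_of_nonneg_right (mul_le_mul_of_nonneg_left h1 hc.le)
                (by positivity)
          _ ≤ c * Real.sqrt (x - a) * (η / ((x - (a - κ))^2 + η^2)) :=
              mul_le_mul_of_nonneg_left h2 (by positivity)
          _ ≤ ρ x * (η / ((x - (a - κ))^2 + η^2)) :=
              mul_le_mul_of_nonneg_right hρx (by positivity)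
      have hlow := stmt14_lower_const_bound _ hg hgnn (a + k + η) (a + k + 2*η)
        (c * Real.sqrt (k + η) * (η / (5 * η^2))) (by linarith) hM
      have heq : c * Real.sqrt (k + η) * (η / (5 * η^2)) * (a + k + 2*η - (a + k + η))
          = c/5 * Real.sqrt (k + η) := by
        field_simp
        ring
      have hle : c/10 * Real.sqrt (k + η) ≤ c/5 * Real.sqrt (k + η) := by nlinarith
      linarith [heq ▸ hlow]
    · -- upper bound
      have hup := stmt14_upper_decomp ρ a b δ C (a - κ) η hρint hmeas hnonneg hsupp hprob
        (fun x hx => (hsq x hx).2) hδ hη0 (by linarith)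
      have hnear := stmt14_near_in a δ k η C hC0.le hk0 hη0 (by linarith)
      rw [← hEk] at hnear
      have hfar : 4 * η / δ^2 ≤ (4 * Real.sqrt δ / δ^2) * Real.sqrt (k + η) := by
        have hηδ' : Real.sqrt η ≤ Real.sqrt δ := Real.sqrt_le_sqrt (by linarith)
        have hηk : Real.sqrt η ≤ Real.sqrt (k + η) := Real.sqrt_le_sqrt (by linarith)
        have hηeq : Real.sqrt η * Real.sqrt η = η := Real.mul_self_sqrt hη0.le
        have hkey : η ≤ Real.sqrt δ * Real.sqrt (k + η) := by
          calc η = Real.sqrt η * Real.sqrt η := hηeq.symm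
            _ ≤ Real.sqrt δ * Real.sqrt (k + η) :=
                mul_le_mul hηδ' hηk (Real.sqrt_nonneg η) (Real.sqrt_nonneg δ)
        rw [show (4 * Real.sqrt δ / δ^2) * Real.sqrt (k + η)
          = 4 * (Real.sqrt δ * Real.sqrt (k + η)) / δ^2 by ring]
        refine (div_le_div_iff_of_pos_right (by positivity : (0:ℝ) < δ^2)).2 ?_
        nlinarith
      have hmain : (2 * Real.pi * C + 8 * C) * Real.sqrt (k + η)
          ≤ (8*C + 4*Real.pi*C) * Real.sqrt (k + η) := by
        nlinarith [mul_nonneg (by positivity : (0:ℝ) ≤ 2*Real.pi*C) hrs.le]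
      have hsum : (8*C + 4*Real.pi*C) * Real.sqrt (k + η)
          + (4 * Real.sqrt δ / δ^2) * Real.sqrt (k + η)
          = (8*C + 4*Real.pi*C + 4*Real.sqrt δ/δ^2) * Real.sqrt (k + η) := by ring
      linarith
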